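/- Let p_1, p_2, p_3 > 1 with 1/p_1 + 1/p_2 + 1/p_3 = 2, and let θ_2, θ_3 be the angles of Theorem 1 (cos θ_2 = √((p_1−1)(p_2−1)), sin θ_2 = √(p_1 p_2 (p_3−1)/p_3), cos θ_3 = −√((p_1−1)(p_3−1)), sin θ_3 = √(p_1 p_3 (p_2−1)/p_2)). For θ ∈ R let P_θ be the orthogonal projection on R^{2n} given by P_θ = U_θ* U_θ with U_θ(x,y) = cos θ x + sin θ y. Then (1/p_1) P_0 + (1/p_2) P_{θ_2} + (1/p_3) P_{θ_3} = Id_{R^{2n}}. -/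

import Mathlib

open Real

set_option maxHeartbeats 1000000 in
theorem stmt18 (n : ℕ) (p₁ p₂ p₃ θ₂ θ₃ : ℝ)
    (hp1 : 1 < p₁) (hp2 : 1 < p₂) (hp3 : 1 < p₃)
    (hsum : 1 / p₁ + 1 / p₂ + 1 / p₃ = 2)
    (hcos2 : Real.cos θ₂ = Real.sqrt ((p₁ - 1) * (p₂ - 1)))
    (hsin2 : Real.sin θ₂ = Real.sqrt (p₁ * p₂ * (p₃ - 1) / p₃))
    (hcos3 : Real.cos θ₃ = -Real.sqrt ((p₁ - 1) * (p₃ - 1)))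
    (hsin3 : Real.sin θ₃ = Real.sqrt (p₁ * p₃ * (p₂ - 1) / p₂))
    (P : ℝ → ((EuclideanSpace ℝ (Fin n) × EuclideanSpace ℝ (Fin n)) →ₗ[ℝ]
              (EuclideanSpace ℝ (Fin n) × EuclideanSpace ℝ (Fin n))))
    (hP : ∀ θ (x y : EuclideanSpace ℝ (Fin n)),
      P θ (x, y) = (Real.cos θ • (Real.cos θ • x + Real.sin θ • y),
                    Real.sin θ • (Real.cos θ • x + Real.sin θ • y))) :
    (1 / p₁) • P 0 + (1 / p₂) • P θ₂ + (1 / p₃) • P θ₃ = LinearMap.id := by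
  have h1 : (0:ℝ) < p₁ := by linarith
  have h2 : (0:ℝ) < p₂ := by linarith
  have h3 : (0:ℝ) < p₃ := by linarith
  have hc2 : Real.cos θ₂ ^ 2 = (p₁ - 1) * (p₂ - 1) := by
    rw [hcos2, Real.sq_sqrt]; nlinarith
  have hs2 : Real.sin θ₂ ^ 2 = p₁ * p₂ * (p₃ - 1) / p₃ := by
    rw [hsin2, Real.sq_sqrt]
    exact div_nonneg (by nlinarith) (by linarith)
  have hc3 : Real.cos θ₃ ^ 2 = (p₁ - 1) * (p₃ - 1) := by
    rw [hcos3, neg_pow, Real.sq_sqrt (by nlinarith)]; ring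
  have hs3 : Real.sin θ₃ ^ 2 = p₁ * p₃ * (p₂ - 1) / p₂ := by
    rw [hsin3, Real.sq_sqrt]
    exact div_nonneg (by nlinarith) (by linarith)
  -- cross terms
  set K : ℝ := (p₁ - 1) * (p₂ - 1) * (p₃ - 1) * p₁ / (p₂ * p₃) with hK
  have hK0 : 0 ≤ K := by
    apply div_nonneg (by nlinarith) (by positivity)
  have hA : (p₁ - 1) * (p₂ - 1) * (p₁ * p₂ * (p₃ - 1) / p₃) = p₂ ^ 2 * K := by
    rw [hK]; field_simp
  have hB : (p₁ - 1) * (p₃ - 1) * (p₁ * p₃ * (p₂ - 1) / p₂) = p₃ ^ 2 * K := by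
    rw [hK]; field_simp
  have hcross2 : Real.cos θ₂ * Real.sin θ₂ = p₂ * Real.sqrt K := by
    rw [hcos2, hsin2, ← Real.sqrt_mul (by nlinarith), hA,
      Real.sqrt_mul (sq_nonneg p₂), Real.sqrt_sq h2.le]
  have hcross3 : Real.cos θ₃ * Real.sin θ₃ = -(p₃ * Real.sqrt K) := by
    rw [hcos3, hsin3, neg_mul, ← Real.sqrt_mul (by nlinarith), hB,
      Real.sqrt_mul (sq_nonneg p₃), Real.sqrt_sq h3.le]
  have hp1' : p₁ ≠ 0 := h1.ne'
  have hp2' : p₂ ≠ 0 := h2.ne'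
  have hp3' : p₃ ≠ 0 := h3.ne'
  -- scalar identities
  have key1 : 1 / p₁ * (Real.cos 0 * Real.cos 0) + 1 / p₂ * (Real.cos θ₂ * Real.cos θ₂)
      + 1 / p₃ * (Real.cos θ₃ * Real.cos θ₃) = 1 := by
    have e2 : Real.cos θ₂ * Real.cos θ₂ = (p₁ - 1) * (p₂ - 1) := by rw [← hc2]; ring
    have e3 : Real.cos θ₃ * Real.cos θ₃ = (p₁ - 1) * (p₃ - 1) := by rw [← hc3]; ring
    rw [Real.cos_zero, e2, e3]
    field_simp at hsum ⊢
    linear_combination (1 - p₁) * hsum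
  have key2 : 1 / p₁ * (Real.cos 0 * Real.sin 0) + 1 / p₂ * (Real.cos θ₂ * Real.sin θ₂)
      + 1 / p₃ * (Real.cos θ₃ * Real.sin θ₃) = 0 := by
    rw [Real.sin_zero, hcross2, hcross3]
    field_simp
    ring
  have key3 : 1 / p₁ * (Real.sin 0 * Real.sin 0) + 1 / p₂ * (Real.sin θ₂ * Real.sin θ₂)
      + 1 / p₃ * (Real.sin θ₃ * Real.sin θ₃) = 1 := by
    have e2 : Real.sin θ₂ * Real.sin θ₂ = p₁ * p₂ * (p₃ - 1) / p₃ := by rw [← hs2]; ring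
    have e3 : Real.sin θ₃ * Real.sin θ₃ = p₁ * p₃ * (p₂ - 1) / p₂ := by rw [← hs3]; ring
    rw [Real.sin_zero, e2, e3]
    field_simp at hsum ⊢
    linear_combination (-p₁) * hsum
  apply LinearMap.ext
  rintro ⟨x, y⟩
  simp only [LinearMap.add_apply, LinearMap.smul_apply, hP, LinearMap.id_apply,
    Prod.smul_mk, Prod.mk_add_mk, smul_add, smul_smul, Prod.mk.injEq]
  constructor
  · match_scalars
    · linear_combination key1
    · linear_combination key2
  · match_scalars
    · linear_combination key2
    · linear_combination key3
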